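/- Let θ > 0, γ > 0 satisfy (1+γ)θ < 1, and let C, D > 0. Then there is no continuous nonnegative function h : (0, ∞) → ℝ satisfying h(t) ≥ C t^{−θ} + D ∫₀ᵗ h(s)^{1+γ} (t−s)^{−θ} ds for all t > 0. -/

import Mathlib

open MeasureTheory Set

/-- Remark following Proposition 2.8 of the paper.
Let `θ > 0`, `γ > 0` satisfy `(1+γ)θ < 1`, and let `C, D > 0`.  Then there is no
continuous nonnegative function `h : (0, ∞) → ℝ` satisfying
`h t ≥ C t^(-θ) + D ∫₀ᵗ h(s)^(1+γ) (t-s)^(-θ) ds` for all `t > 0`, where the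
integral is the Lebesgue integral of the nonnegative integrand over `(0, t)`. -/
theorem no_global_solution_renewal_inequality_singular_initial
    (θ γ C D : ℝ) (hθ : 0 < θ) (hγ : 0 < γ) (hsub : (1 + γ) * θ < 1)
    (hC : 0 < C) (hD : 0 < D) :
    ¬ ∃ h : ℝ → ℝ,
      ContinuousOn h (Set.Ioi 0) ∧
      (∀ t ∈ Set.Ioi (0 : ℝ), 0 ≤ h t) ∧
      (∀ t : ℝ, 0 < t →
        ENNReal.ofReal (C * t ^ (-θ))
          + ENNReal.ofReal D *
            ∫⁻ s in Set.Ioo 0 t, ENNReal.ofReal (h s ^ (1 + γ) * (t - s) ^ (-θ))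
          ≤ ENNReal.ofReal (h t)) := by
  rintro ⟨h, _hcont, hnn, hineq⟩
  have h' : θ + θ * γ < 1 := by linear_combination hsub
  have hθ1 : θ < 1 := by nlinarith [mul_pos hθ hγ]
  set δ : ℝ := 1 - θ with hδdef
  have hδ : 0 < δ := by simp only [hδdef]; linarith
  set ε : ℝ := δ - θ * γ with hεdef
  have hε : 0 < ε := by simp only [hεdef, hδdef]; linarith
  set B : ℝ := (2 : ℝ) ^ (δ / γ) with hBdef
  have hB0 : 0 < B := Real.rpow_pos_of_pos two_pos _
  have hB1 : 1 < B := by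
    rw [hBdef, Real.one_lt_rpow_iff_of_pos two_pos]
    exact Or.inl ⟨one_lt_two, by positivity⟩
  set q : ℝ := (2 : ℝ) ^ δ with hqdef
  have hq0 : 0 < q := Real.rpow_pos_of_pos two_pos _
  have hBq : B ^ γ = q := by
    rw [hBdef, hqdef, ← Real.rpow_mul (by norm_num), div_mul_cancel₀ _ hγ.ne']
  set A : ℝ := D * C ^ γ * (2 : ℝ) ^ (-(θ * γ)) with hAdef
  have hA : 0 < A := by positivity
  set T : ℝ := max 1 ((q * B / A) ^ (1 / ε)) with hTdef
  have hT1 : (1 : ℝ) ≤ T := le_max_left _ _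
  have hT0 : (0 : ℝ) < T := lt_of_lt_of_le one_pos hT1
  have h2T : (0 : ℝ) < 2 * T := by linarith
  set m0 : ℝ := C * (2 * T) ^ (-θ) with hm0def
  have hm0 : 0 < m0 := mul_pos hC (Real.rpow_pos_of_pos h2T _)
  -- key estimate coming from the choice of T
  have e1 : m0 ^ γ = C ^ γ * ((2 : ℝ) ^ (-(θ * γ)) * T ^ (-(θ * γ))) := by
    rw [hm0def, Real.mul_rpow hC.le (Real.rpow_nonneg h2T.le _),
      ← Real.rpow_mul h2T.le, show -θ * γ = -(θ * γ) by ring,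
      Real.mul_rpow (by norm_num) hT0.le]
  have e2 : T ^ (-(θ * γ)) * T ^ δ = T ^ ε := by
    rw [← Real.rpow_add hT0, hεdef]; ring_nf
  have key : D * m0 ^ γ * T ^ δ = A * T ^ ε := by
    calc D * m0 ^ γ * T ^ δ
        = (D * C ^ γ * (2 : ℝ) ^ (-(θ * γ))) * (T ^ (-(θ * γ)) * T ^ δ) := by
          rw [e1]; ring
      _ = A * T ^ ε := by rw [e2, hAdef]
  have hstar : q * B ≤ D * m0 ^ γ * T ^ δ := by
    rw [key]
    have hx0 : (0 : ℝ) ≤ q * B / A := by positivity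
    have hr : (q * B / A) ^ (1 / ε) ≤ T := le_max_right _ _
    have hrr : ((q * B / A) ^ (1 / ε)) ^ ε = q * B / A := by
      rw [← Real.rpow_mul hx0, one_div_mul_cancel hε.ne', Real.rpow_one]
    have h5 : q * B / A ≤ T ^ ε := by
      rw [← hrr]
      exact Real.rpow_le_rpow (Real.rpow_nonneg hx0 _) hr hε.le
    calc q * B = A * (q * B / A) := by field_simp
      _ ≤ A * T ^ ε := mul_le_mul_of_nonneg_left h5 hA.le
  -- from now on, the precise values of the constants are irrelevant
  clear_value B q A m0
  clear hBdef hAdef e1 e2 key hεdef hA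
  -- main induction: `h ≥ m0 * B^n` on `[2T - T/2^n, 2T]`
  have main : ∀ n : ℕ, ∀ t : ℝ, 2 * T - T / 2 ^ n ≤ t → t ≤ 2 * T →
      m0 * B ^ n ≤ h t := by
    intro n
    induction n with
    | zero =>
      intro t hta htb
      have htT : T ≤ t := by norm_num at hta; linarith
      have ht0 : 0 < t := lt_of_lt_of_le hT0 htT
      have h1 := hineq t ht0
      have h2 : ENNReal.ofReal (C * t ^ (-θ)) ≤ ENNReal.ofReal (h t) :=
        le_trans (self_le_add_right _ _) h1
      have h3 : C * t ^ (-θ) ≤ h t :=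
        (ENNReal.ofReal_le_ofReal_iff (hnn t (mem_Ioi.mpr ht0))).mp h2
      have h4 : (2 * T) ^ (-θ) ≤ t ^ (-θ) :=
        Real.rpow_le_rpow_of_nonpos ht0 htb (neg_nonpos.mpr hθ.le)
      have h6 : m0 ≤ C * t ^ (-θ) := by
        rw [hm0def]
        exact mul_le_mul_of_nonneg_left h4 hC.le
      simpa using le_trans h6 h3
    | succ n ih =>
      intro t hta htb
      have hhalf : T / 2 ^ n = 2 * (T / 2 ^ (n + 1)) := by
        rw [pow_succ]; field_simp
      have hpos : 0 < T / 2 ^ (n + 1) := by positivity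
      have hposn : T / 2 ^ n ≤ T := div_le_self hT0.le (one_le_pow₀ one_le_two)
      set a : ℝ := 2 * T - T / 2 ^ n with hadef
      have hgap : T / 2 ^ (n + 1) ≤ t - a := by
        rw [hadef]; rw [hhalf] at *; linarith
      have haT : T ≤ a := by rw [hadef]; linarith
      have ha0 : 0 < a := lt_of_lt_of_le hT0 haT
      have htsub : 0 < t - a := lt_of_lt_of_le hpos hgap
      have ht0 : 0 < t := by linarith
      have hx : (0 : ℝ) < m0 * B ^ n := mul_pos hm0 (pow_pos hB0 n)
      set c : ℝ := (m0 * B ^ n) ^ (1 + γ) * (t - a) ^ (-θ) with hcdef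
      have hc0 : 0 ≤ c := by
        rw [hcdef]
        exact mul_nonneg (Real.rpow_nonneg hx.le _) (Real.rpow_nonneg htsub.le _)
      have hpt : ∀ s ∈ Ioo a t,
          ENNReal.ofReal c ≤ ENNReal.ofReal (h s ^ (1 + γ) * (t - s) ^ (-θ)) := by
        intro s hs
        apply ENNReal.ofReal_le_ofReal
        have hhs : m0 * B ^ n ≤ h s := ih s hs.1.le (le_trans hs.2.le htb)
        have k1 : (m0 * B ^ n) ^ (1 + γ) ≤ h s ^ (1 + γ) :=
          Real.rpow_le_rpow hx.le hhs (by linarith)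
        have k2 : (t - a) ^ (-θ) ≤ (t - s) ^ (-θ) :=
          Real.rpow_le_rpow_of_nonpos (by linarith [hs.2]) (by linarith [hs.1])
            (neg_nonpos.mpr hθ.le)
        rw [hcdef]
        exact mul_le_mul k1 k2 (Real.rpow_nonneg htsub.le _)
          (Real.rpow_nonneg (le_trans hx.le hhs) _)
      have hI : ENNReal.ofReal c * ENNReal.ofReal (t - a)
          ≤ ∫⁻ s in Ioo 0 t, ENNReal.ofReal (h s ^ (1 + γ) * (t - s) ^ (-θ)) := by
        calc ENNReal.ofReal c * ENNReal.ofReal (t - a)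
            = ∫⁻ _ in Ioo a t, ENNReal.ofReal c := by
              rw [setLIntegral_const, Real.volume_Ioo]
          _ ≤ ∫⁻ s in Ioo a t, ENNReal.ofReal (h s ^ (1 + γ) * (t - s) ^ (-θ)) :=
              setLIntegral_mono' measurableSet_Ioo hpt
          _ ≤ ∫⁻ s in Ioo 0 t, ENNReal.ofReal (h s ^ (1 + γ) * (t - s) ^ (-θ)) :=
              lintegral_mono_set (Ioo_subset_Ioo ha0.le le_rfl)
      have h2 : ENNReal.ofReal D * (ENNReal.ofReal c * ENNReal.ofReal (t - a))
          ≤ ENNReal.ofReal (h t) :=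
        le_trans (le_trans (mul_le_mul_right hI _) le_add_self) (hineq t ht0)
      rw [← ENNReal.ofReal_mul hc0, ← ENNReal.ofReal_mul hD.le] at h2
      have h3 : D * (c * (t - a)) ≤ h t :=
        (ENNReal.ofReal_le_ofReal_iff (hnn t (mem_Ioi.mpr ht0))).mp h2
      have e3 : c * (t - a) = (m0 * B ^ n) ^ (1 + γ) * (t - a) ^ δ := by
        rw [hcdef, mul_assoc]
        congr 1
        nth_rewrite 2 [← Real.rpow_one (t - a)]
        rw [← Real.rpow_add htsub, hδdef]
        ring_nf
      have e4 : (T / 2 ^ (n + 1)) ^ δ ≤ (t - a) ^ δ :=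
        Real.rpow_le_rpow hpos.le hgap hδ.le
      have h5 : D * ((m0 * B ^ n) ^ (1 + γ) * (T / 2 ^ (n + 1)) ^ δ) ≤ h t := by
        rw [e3] at h3
        refine le_trans ?_ h3
        exact mul_le_mul_of_nonneg_left
          (mul_le_mul_of_nonneg_left e4 (Real.rpow_nonneg hx.le _)) hD.le
      refine le_trans ?_ h5
      -- pure algebra, using `hstar`
      have ex1 : (m0 * B ^ n) ^ (1 + γ) = (m0 * B ^ n) * (m0 * B ^ n) ^ γ := by
        rw [Real.rpow_add hx, Real.rpow_one]
      have ex2 : (m0 * B ^ n) ^ γ = m0 ^ γ * q ^ n := by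
        rw [Real.mul_rpow hm0.le (pow_nonneg hB0.le n)]
        congr 1
        rw [← Real.rpow_natCast B n, ← Real.rpow_mul hB0.le,
          mul_comm (n : ℝ) γ, Real.rpow_mul hB0.le, hBq, Real.rpow_natCast]
      have ex3 : (T / 2 ^ (n + 1) : ℝ) ^ δ = T ^ δ / q ^ (n + 1) := by
        rw [Real.div_rpow hT0.le (by positivity)]
        congr 1
        rw [← Real.rpow_natCast (2 : ℝ) (n + 1), ← Real.rpow_mul (by norm_num),
          mul_comm ((n + 1 : ℕ) : ℝ) δ, Real.rpow_mul (by norm_num : (0:ℝ) ≤ 2),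
          Real.rpow_natCast, hqdef]
      rw [ex1, ex2, ex3]
      have hqn : (0 : ℝ) < q ^ n := pow_pos hq0 n
      have expand : D * (m0 * B ^ n * (m0 ^ γ * q ^ n) * (T ^ δ / q ^ (n + 1)))
          = (m0 * B ^ n) * ((D * m0 ^ γ * T ^ δ) / q) := by
        rw [pow_succ]
        field_simp
      rw [expand, pow_succ]
      have hBle : B ≤ (D * m0 ^ γ * T ^ δ) / q :=
        (le_div_iff₀ hq0).mpr (by linarith [hstar])
      calc m0 * (B ^ n * B) = (m0 * B ^ n) * B := by ring
        _ ≤ (m0 * B ^ n) * ((D * m0 ^ γ * T ^ δ) / q) :=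
            mul_le_mul_of_nonneg_left hBle hx.le
  -- conclusion: `h (2T)` would be larger than `m0 * B ^ n` for every `n`
  obtain ⟨n, hn⟩ := pow_unbounded_of_one_lt (h (2 * T) / m0) hB1
  have hd2T : 0 < T / 2 ^ n := by positivity
  have hle : m0 * B ^ n ≤ h (2 * T) := main n (2 * T) (by linarith) le_rfl
  have hlt : h (2 * T) < m0 * B ^ n := by
    rw [div_lt_iff₀ hm0] at hn
    linarith [hn]
  linarith
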